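/- Let δ > 0, λ₁ > 0, λ₂ < 0. The function W : ℝ × ℝ → ℝ defined by W(y,t) = (λ₁ − λ₂)^{-1} · exp(−(2δ/(λ₁ − λ₂)²)(−λ₁λ₂ t + ((λ₁ + λ₂)/2) y)) · ∑_{n=0}^∞ (1/(n!)²) ((δ² λ₁ λ₂/(λ₁ − λ₂)⁴)(y − λ₁ t)(y − λ₂ t))^n is smooth on all of ℝ², and it coincides with the kernel V on the region {(y,t) : t ≥ 0, λ₂ t ≤ y ≤ λ₁ t}; in particular V extends to a smooth function on ℝ². -/

import Mathlib

open Filter FormalMultilinearSeries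

noncomputable def myC : ℕ → ℝ := fun n => 1 / ((n.factorial : ℝ)) ^ 2

noncomputable def myF : ℝ → ℝ := fun x => ∑' n : ℕ, myC n * x ^ n

lemma myC_pos (n : ℕ) : 0 < myC n := by
  have h : (0:ℝ) < (n.factorial : ℝ) := Nat.cast_pos.2 n.factorial_pos
  unfold myC; positivity

lemma myRadius : (FormalMultilinearSeries.ofScalars ℝ myC).radius = ⊤ := by
  apply ofScalars_radius_eq_top_of_tendsto
  · exact Eventually.of_forall fun n => (myC_pos n).ne'
  · have h : (fun n : ℕ => ‖myC n.succ‖ / ‖myC n‖) = fun n : ℕ => 1 / ((n : ℝ) + 1) ^ 2 := by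
      funext n
      rw [Real.norm_eq_abs, Real.norm_eq_abs, abs_of_pos (myC_pos _), abs_of_pos (myC_pos _)]
      have hfac : ((n.factorial : ℝ)) ≠ 0 := by positivity
      simp only [myC, Nat.factorial_succ, Nat.cast_mul]
      field_simp
      push_cast; ring
    rw [h]
    have h1 : Filter.Tendsto (fun n : ℕ => ((n : ℝ) + 1)) atTop atTop :=
      tendsto_atTop_add_const_right _ 1 tendsto_natCast_atTop_atTop
    have h2 : Filter.Tendsto (fun n : ℕ => ((n : ℝ) + 1) ^ 2) atTop atTop :=
      (tendsto_pow_atTop two_ne_zero).comp h1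
    simp only [one_div]; exact h2.inv_tendsto_atTop

lemma myF_eq_sum : myF = (FormalMultilinearSeries.ofScalars ℝ myC).sum := by
  funext x
  simp only [myF, FormalMultilinearSeries.sum]
  exact tsum_congr fun n => by
    rw [FormalMultilinearSeries.ofScalars_apply_eq, smul_eq_mul]

lemma myF_contDiff : ContDiff ℝ (⊤ : ℕ∞) myF := by
  rw [myF_eq_sum]
  have h := (FormalMultilinearSeries.ofScalars ℝ myC).hasFPowerSeriesOnBall
    (by rw [myRadius]; exact ENNReal.zero_lt_top)
  rw [myRadius] at h
  have : AnalyticOnNhd ℝ (FormalMultilinearSeries.ofScalars ℝ myC).sum Set.univ := by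
    intro x _
    exact h.analyticAt_of_mem (by simp)
  exact contDiff_iff_contDiffAt.2 fun x => (this x (Set.mem_univ x)).contDiffAt.of_le le_top

open MeasureTheory

/-- Modified Bessel function of the first kind, order 0. -/
noncomputable def besselI0 (x : ℝ) : ℝ :=
  ∑' n : ℕ, (1 / ((n.factorial : ℝ)) ^ 2) * (x / 2) ^ (2 * n)

/-- The kernel `V` of the general damped wave equation (defined with `I₀` and square roots). -/
noncomputable def Vker (d l1 l2 y t : ℝ) : ℝ :=
  (l1 - l2)⁻¹ *
    Real.exp (-(2 * d / (l1 - l2) ^ 2) * (-(l1 * l2) * t + ((l1 + l2) / 2) * y)) *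
    besselI0 ((2 * d * Real.sqrt (-(l1 * l2)) / (l1 - l2) ^ 2) *
      Real.sqrt (-((y - l1 * t) * (y - l2 * t))))

/-- The everywhere-defined power-series form `W` of the kernel. -/
noncomputable def Wker (d l1 l2 y t : ℝ) : ℝ :=
  (l1 - l2)⁻¹ *
    Real.exp (-(2 * d / (l1 - l2) ^ 2) * (-(l1 * l2) * t + ((l1 + l2) / 2) * y)) *
    ∑' n : ℕ, (1 / ((n.factorial : ℝ)) ^ 2) *
      ((d ^ 2 * l1 * l2 / (l1 - l2) ^ 4) * ((y - l1 * t) * (y - l2 * t))) ^ n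

/-- The function `W` is smooth on all of `ℝ²` and coincides with the kernel `V` on the region
`{(y,t) : t ≥ 0, λ₂t ≤ y ≤ λ₁t}`; in particular `V` extends to a smooth function on `ℝ²`. -/
theorem Vker_smooth_extension
    (d l1 l2 : ℝ) (hd : 0 < d) (hl1 : 0 < l1) (hl2 : l2 < 0) :
    ContDiff ℝ (⊤ : ℕ∞) (fun p : ℝ × ℝ => Wker d l1 l2 p.1 p.2)
      ∧ (∀ y t : ℝ, 0 ≤ t → l2 * t ≤ y → y ≤ l1 * t →
          Wker d l1 l2 y t = Vker d l1 l2 y t) := by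
  constructor
  · have hW : (fun p : ℝ × ℝ => Wker d l1 l2 p.1 p.2) = fun p : ℝ × ℝ =>
        (l1 - l2)⁻¹ *
          Real.exp (-(2 * d / (l1 - l2) ^ 2) * (-(l1 * l2) * p.2 + ((l1 + l2) / 2) * p.1)) *
          myF ((d ^ 2 * l1 * l2 / (l1 - l2) ^ 4) * ((p.1 - l1 * p.2) * (p.1 - l2 * p.2))) := rfl
    rw [hW]
    apply ContDiff.mul
    · exact contDiff_const.mul (Real.contDiff_exp.comp (by fun_prop))
    · exact myF_contDiff.comp (by fun_prop)
  · intro y t ht h2 h1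
    have hA : (0:ℝ) ≤ -(l1 * l2) := by nlinarith
    have hB : (0:ℝ) ≤ -((y - l1 * t) * (y - l2 * t)) := by nlinarith
    have hne : l1 - l2 ≠ 0 := by nlinarith
    unfold Wker Vker besselI0
    congr 1
    refine tsum_congr fun n => ?_
    congr 1
    rw [pow_mul]
    congr 1
    set a := Real.sqrt (-(l1 * l2)) with ha
    set b := Real.sqrt (-((y - l1 * t) * (y - l2 * t))) with hb
    have h1' : a ^ 2 = -(l1 * l2) := Real.sq_sqrt hA
    have h2' : b ^ 2 = -((y - l1 * t) * (y - l2 * t)) := Real.sq_sqrt hB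
    have : (2 * d * a / (l1 - l2) ^ 2 * b / 2) ^ 2
        = d ^ 2 * (a ^ 2) * (b ^ 2) / (l1 - l2) ^ 4 := by
      field_simp
    rw [this, h1', h2']
    ring
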